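/- Let δ > 0 and C₀ > 0, and let g : ℝ² × ℝ³ → [0,∞) be measurable such that sup_{x ∈ ℝ², (p₁,p₂) ∈ ℝ²} ∫_ℝ g(x, p₁, p₂, p₃) ⟨p₃⟩^{5+δ} dp₃ ≤ C₀. Let M, S be real numbers with min{M, 5+δ} ≥ S > −2. Then there is a constant C, depending only on C₀, S, M and δ, such that ‖p_0^S g‖_{L^{(M+2)/(S+2)}_x L^1_p} ≤ C ‖p_0^M g‖_{L^1_x L^1_p}^{(S+2)/(M+2)}. -/

import Mathlib

open MeasureTheory
open scoped NNReal ENNReal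

/-- `p₀ = √(1 + |p|²)` for `p ∈ ℝ³`. -/
noncomputable def pZero3 (p : EuclideanSpace ℝ (Fin 3)) : ℝ := Real.sqrt (1 + ‖p‖ ^ 2)

/-- The vector `(p₁, p₂, p₃) ∈ ℝ³`. -/
noncomputable def vec3 (p₁ p₂ p₃ : ℝ) : EuclideanSpace ℝ (Fin 3) :=
  (EuclideanSpace.equiv (Fin 3) ℝ).symm ![p₁, p₂, p₃]

/-! ### Auxiliary lemmas -/

section Aux

lemma one_le_pZero3 (p : EuclideanSpace ℝ (Fin 3)) : 1 ≤ pZero3 p := by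
  rw [pZero3, Real.one_le_sqrt]; nlinarith [sq_nonneg ‖p‖]

lemma pZero3_pos (p : EuclideanSpace ℝ (Fin 3)) : 0 < pZero3 p :=
  lt_of_lt_of_le one_pos (one_le_pZero3 p)

lemma pZero3_sq (p : EuclideanSpace ℝ (Fin 3)) : pZero3 p ^ 2 = 1 + ‖p‖ ^ 2 := by
  rw [pZero3, Real.sq_sqrt]; positivity

lemma norm_sq_E3 (p : EuclideanSpace ℝ (Fin 3)) :
    ‖p‖ ^ 2 = p 0 ^ 2 + p 1 ^ 2 + p 2 ^ 2 := by
  rw [EuclideanSpace.norm_eq, Real.sq_sqrt (by positivity)]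
  simp [Fin.sum_univ_three, sq_abs]

@[simp] lemma vec3_zero (p₁ p₂ p₃ : ℝ) : vec3 p₁ p₂ p₃ 0 = p₁ := rfl
@[simp] lemma vec3_one (p₁ p₂ p₃ : ℝ) : vec3 p₁ p₂ p₃ 1 = p₂ := rfl
@[simp] lemma vec3_two (p₁ p₂ p₃ : ℝ) : vec3 p₁ p₂ p₃ 2 = p₃ := rfl

lemma pZero3_vec3 (p₁ p₂ p₃ : ℝ) :
    pZero3 (vec3 p₁ p₂ p₃) = Real.sqrt (1 + p₁ ^ 2 + p₂ ^ 2 + p₃ ^ 2) := by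
  rw [pZero3, norm_sq_E3]
  norm_num [add_assoc]

lemma measurable_coord3 (i : Fin 3) : Measurable (fun p : EuclideanSpace ℝ (Fin 3) => p i) :=
  (measurable_pi_apply i).comp ((MeasurableEquiv.toLp 2 (Fin 3 → ℝ)).symm).measurable

lemma continuous_pZero3 : Continuous pZero3 :=
  Real.continuous_sqrt.comp (continuous_const.add (continuous_norm.pow 2))

lemma measurable_FS (S : ℝ) (G : EuclideanSpace ℝ (Fin 3) → ℝ) (hG : Measurable G) :
    Measurable (fun p => ENNReal.ofReal (pZero3 p ^ S * G p)) :=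
  ENNReal.measurable_ofReal.comp
    (((continuous_pZero3.rpow_const (fun p => Or.inl (by
        have := one_le_pZero3 p; intro h; rw [h] at this; linarith))).measurable).mul hG)

lemma measurable_dfun (a R : ℝ) :
    Measurable ((Set.Icc (-R) R).indicator
      (fun t : ℝ => ENNReal.ofReal (Real.sqrt (1 + t ^ 2) ^ a))) := by
  refine Measurable.indicator ?_ measurableSet_Icc
  refine ENNReal.measurable_ofReal.comp (Continuous.measurable ?_)
  refine Continuous.rpow_const (Real.continuous_sqrt.comp (by continuity)) fun t => Or.inl ?_
  have : (1:ℝ) ≤ Real.sqrt (1 + t ^ 2) := by rw [Real.one_le_sqrt]; nlinarith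
  intro h; rw [h] at this; linarith

/-- Fubini for `ℝ³`. -/
lemma lintegral_E3 (φ : EuclideanSpace ℝ (Fin 3) → ℝ≥0∞) (hφ : Measurable φ) :
    ∫⁻ p, φ p = ∫⁻ p₁ : ℝ, ∫⁻ p₂ : ℝ, ∫⁻ p₃ : ℝ, φ (vec3 p₁ p₂ p₃) := by
  rw [((EuclideanSpace.volume_preserving_symm_measurableEquiv_toLp (Fin 3)).symm).lintegral_map_equiv
      φ ((MeasurableEquiv.toLp 2 (Fin 3 → ℝ)).symm).symm]
  set T := MeasurableEquiv.piFinSuccAbove (fun _ : Fin 3 => ℝ) 0 with hT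
  rw [((volume_preserving_piFinSuccAbove (fun _ : Fin 3 => ℝ) 0).symm).lintegral_map_equiv _ T.symm]
  have m1 : AEMeasurable (fun z : ℝ × (Fin 2 → ℝ) =>
      φ (((MeasurableEquiv.toLp 2 (Fin 3 → ℝ)).symm).symm (T.symm z)))
      (volume.prod volume) :=
    ((hφ.comp (((MeasurableEquiv.toLp 2 (Fin 3 → ℝ)).symm).symm.measurable.comp
      T.symm.measurable))).aemeasurable
  rw [Measure.volume_eq_prod, lintegral_prod _ m1]
  congr 1; funext p₁
  rw [((volume_preserving_finTwoArrow ℝ).symm).lintegral_map_equiv _ _]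
  have m2 : AEMeasurable (fun z : ℝ × ℝ =>
      φ (((MeasurableEquiv.toLp 2 (Fin 3 → ℝ)).symm).symm
        (T.symm (p₁, MeasurableEquiv.finTwoArrow.symm z)))) (volume.prod volume) :=
    ((hφ.comp (((MeasurableEquiv.toLp 2 (Fin 3 → ℝ)).symm).symm.measurable.comp
      (T.symm.measurable.comp (measurable_const.prodMk
        MeasurableEquiv.finTwoArrow.symm.measurable))))).aemeasurable
  rw [Measure.volume_eq_prod, lintegral_prod _ m2]
  congr 1; funext p₂
  congr 1; funext p₃
  congr 1
  ext i
  fin_cases i <;> rfl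

open intervalIntegral in
lemma piece_Jlem {a R : ℝ} (ha1 : -1 < a) (ha2 : a ≤ 0) (hR : 1 ≤ R) :
    ∫⁻ t in Set.Ioc 0 R, ENNReal.ofReal (Real.sqrt (1 + t ^ 2) ^ a)
      ≤ ENNReal.ofReal (R ^ (a + 1) / (a + 1)) := by
  have h1 : ∫⁻ t in Set.Ioc 0 R, ENNReal.ofReal (Real.sqrt (1 + t ^ 2) ^ a)
      ≤ ∫⁻ t in Set.Ioc 0 R, ENNReal.ofReal (t ^ a) := by
    refine setLIntegral_mono (by fun_prop) fun t ht => ?_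
    refine ENNReal.ofReal_le_ofReal (Real.rpow_le_rpow_of_nonpos ht.1 ?_ ha2)
    nlinarith [Real.sq_sqrt (by positivity : (0:ℝ) ≤ 1 + t ^ 2),
      Real.sqrt_nonneg (1 + t ^ 2), sq_nonneg (Real.sqrt (1 + t ^ 2) - t)]
  have h2 : ∫⁻ t in Set.Ioc 0 R, ENNReal.ofReal (t ^ a)
      = ENNReal.ofReal (∫ t in Set.Ioc 0 R, t ^ a) := by
    rw [MeasureTheory.ofReal_integral_eq_lintegral_ofReal]
    · exact (intervalIntegral.intervalIntegrable_rpow' ha1 (a := 0) (b := R)).1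
    · filter_upwards [ae_restrict_mem measurableSet_Ioc] with t ht
      exact Real.rpow_nonneg ht.1.le a
  have h3 : ∫ t in Set.Ioc 0 R, t ^ a = R ^ (a + 1) / (a + 1) := by
    rw [← intervalIntegral.integral_of_le (by linarith : (0:ℝ) ≤ R),
      integral_rpow (Or.inl ha1),
      Real.zero_rpow (by linarith : a + 1 ≠ 0), sub_zero]
  calc _ ≤ _ := h1
    _ = _ := h2
    _ ≤ _ := by rw [h3]

lemma Jlem {a R : ℝ} (ha1 : -1 < a) (ha2 : a ≤ 0) (hR : 1 ≤ R) :
    ∫⁻ t in Set.Icc (-R) R, ENNReal.ofReal (Real.sqrt (1 + t ^ 2) ^ a)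
      ≤ ENNReal.ofReal (2 / (a + 1) * R ^ (a + 1)) := by
  set f : ℝ → ℝ≥0∞ := fun t => ENNReal.ofReal (Real.sqrt (1 + t ^ 2) ^ a) with hf
  have hsub : Set.Icc (-R) R ⊆ Set.Icc (-R) 0 ∪ Set.Ioc 0 R := by
    intro t ht
    rcases le_or_gt t 0 with h | h
    · exact Or.inl ⟨ht.1, h⟩
    · exact Or.inr ⟨h, ht.2⟩
  have hneg : ∫⁻ t in Set.Icc (-R) 0, f t = ∫⁻ t in Set.Icc 0 R, f t := by
    have hpre : (Neg.neg ⁻¹' Set.Icc (-R) 0 : Set ℝ) = Set.Icc 0 R := by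
      ext t; simp only [Set.mem_preimage, Set.mem_Icc]
      constructor <;> rintro ⟨h1, h2⟩ <;> constructor <;> linarith
    have := (Measure.measurePreserving_neg (volume : Measure ℝ)).setLIntegral_comp_preimage
      (s := Set.Icc (-R) 0) measurableSet_Icc (f := f) (by fun_prop)
    rw [hpre] at this
    rw [← this]
    refine lintegral_congr fun t => ?_
    simp [f, neg_sq]
  have hIcc : ∫⁻ t in Set.Icc 0 R, f t = ∫⁻ t in Set.Ioc 0 R, f t := by
    rw [Measure.restrict_congr_set MeasureTheory.Ioc_ae_eq_Icc.symm]
  calc ∫⁻ t in Set.Icc (-R) R, f t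
      ≤ ∫⁻ t in Set.Icc (-R) 0 ∪ Set.Ioc 0 R, f t := lintegral_mono_set hsub
    _ ≤ (∫⁻ t in Set.Icc (-R) 0, f t) + ∫⁻ t in Set.Ioc 0 R, f t := lintegral_union_le _ _ _
    _ ≤ ENNReal.ofReal (R ^ (a + 1) / (a + 1)) + ENNReal.ofReal (R ^ (a + 1) / (a + 1)) := by
        rw [hneg, hIcc]
        exact add_le_add (piece_Jlem ha1 ha2 hR) (piece_Jlem ha1 ha2 hR)
    _ = ENNReal.ofReal (2 / (a + 1) * R ^ (a + 1)) := by
        have hnn : 0 ≤ R ^ (a + 1) / (a + 1) :=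
          div_nonneg (Real.rpow_nonneg (by linarith) _) (by linarith)
        rw [← ENNReal.ofReal_add hnn hnn]
        ring_nf

/-- tail estimate -/
lemma keyTail {S M R : ℝ} (hSM : S ≤ M) (hR : 0 < R) (p : EuclideanSpace ℝ (Fin 3))
    (hp : R ≤ pZero3 p) : pZero3 p ^ S ≤ R ^ (S - M) * pZero3 p ^ M := by
  have h0 := pZero3_pos p
  have h1 : pZero3 p ^ S = pZero3 p ^ (S - M) * pZero3 p ^ M := by
    rw [← Real.rpow_add h0]; ring_nf
  rw [h1]
  have h2 : pZero3 p ^ (S - M) ≤ R ^ (S - M) :=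
    Real.rpow_le_rpow_of_nonpos hR hp (by linarith)
  exact mul_le_mul_of_nonneg_right h2 (Real.rpow_nonneg h0.le M)

/-- ball estimate, key pointwise bound -/
lemma keyBall (S δ : ℝ) (hδ : 0 < δ) (hSδ : S ≤ 5 + δ) (hS : -2 < S) :
    ∃ a : ℝ, -1 < a ∧ a ≤ 0 ∧ ∃ κ : ℝ, 0 < κ ∧ ∀ R : ℝ, 1 ≤ R →
      ∀ p₁ p₂ p₃ : ℝ, p₁ ^ 2 + p₂ ^ 2 ≤ R ^ 2 →
        pZero3 (vec3 p₁ p₂ p₃) ^ S ≤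
          κ * R ^ (S - 2 * a) *
            (Real.sqrt (1 + p₁ ^ 2) ^ a * Real.sqrt (1 + p₂ ^ 2) ^ a) *
            Real.sqrt (1 + p₃ ^ 2) ^ (5 + δ) := by
  rcases le_or_gt 0 S with hS0 | hS0
  · -- a = 0, κ = √2 ^ S
    refine ⟨0, by norm_num, le_refl 0, Real.sqrt 2 ^ S, by positivity, fun R hR p₁ p₂ p₃ hball => ?_⟩
    have hR0 : (0:ℝ) < R := by linarith
    rw [Real.rpow_zero, Real.rpow_zero, pZero3_vec3]
    have hv : (0:ℝ) < 1 + p₃ ^ 2 := by positivity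
    set u := Real.sqrt (1 + p₁ ^ 2 + p₂ ^ 2) with hu
    set v := Real.sqrt (1 + p₃ ^ 2) with hv2
    have hu1 : 1 ≤ u := by rw [hu, Real.one_le_sqrt]; nlinarith
    have hv1 : 1 ≤ v := by rw [hv2, Real.one_le_sqrt]; nlinarith
    have huv : Real.sqrt (1 + p₁ ^ 2 + p₂ ^ 2 + p₃ ^ 2) ≤ u * v := by
      rw [hu, hv2, ← Real.sqrt_mul (by positivity)]
      apply Real.sqrt_le_sqrt; nlinarith
    have h1 : Real.sqrt (1 + p₁ ^ 2 + p₂ ^ 2 + p₃ ^ 2) ^ S ≤ (u * v) ^ S :=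
      Real.rpow_le_rpow (Real.sqrt_nonneg _) huv hS0
    have h2 : (u * v) ^ S = u ^ S * v ^ S := Real.mul_rpow (by positivity) (by positivity)
    have h3 : u ^ S ≤ (Real.sqrt 2 * R) ^ S := by
      apply Real.rpow_le_rpow (by positivity) _ hS0
      rw [hu]
      calc Real.sqrt (1 + p₁ ^ 2 + p₂ ^ 2) ≤ Real.sqrt (2 * R ^ 2) := by
            apply Real.sqrt_le_sqrt; nlinarith
        _ = Real.sqrt 2 * R := by
            rw [Real.sqrt_mul (by norm_num), Real.sqrt_sq hR0.le]
    have h4 : v ^ S ≤ v ^ (5 + δ) := Real.rpow_le_rpow_of_exponent_le hv1 hSδ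
    have h5 : (Real.sqrt 2 * R) ^ S = Real.sqrt 2 ^ S * R ^ S := by
      rw [Real.mul_rpow (Real.sqrt_nonneg 2) hR0.le]
    calc Real.sqrt (1 + p₁ ^ 2 + p₂ ^ 2 + p₃ ^ 2) ^ S ≤ u ^ S * v ^ S := by rw [← h2]; exact h1
      _ ≤ (Real.sqrt 2 ^ S * R ^ S) * v ^ (5 + δ) := by
          apply mul_le_mul (by rw [← h5]; exact h3) h4 (Real.rpow_nonneg (by positivity) _)
            (by positivity)
      _ = Real.sqrt 2 ^ S * R ^ (S - 2 * 0) * (1 * 1) * v ^ (5 + δ) := by ring_nf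
  · -- a = S/2, κ = 1
    refine ⟨S / 2, by linarith, by linarith, 1, one_pos, fun R hR p₁ p₂ p₃ hball => ?_⟩
    have hR0 : (0:ℝ) < R := by linarith
    rw [pZero3_vec3]
    set u1 := Real.sqrt (1 + p₁ ^ 2) with hu1d
    set u2 := Real.sqrt (1 + p₂ ^ 2) with hu2d
    set v := Real.sqrt (1 + p₃ ^ 2) with hvd
    have hu11 : 1 ≤ u1 := by rw [hu1d, Real.one_le_sqrt]; nlinarith
    have hu21 : 1 ≤ u2 := by rw [hu2d, Real.one_le_sqrt]; nlinarith
    have hv1 : 1 ≤ v := by rw [hvd, Real.one_le_sqrt]; nlinarith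
    have hge : Real.sqrt (u1 * u2) ≤ Real.sqrt (1 + p₁ ^ 2 + p₂ ^ 2 + p₃ ^ 2) := by
      apply Real.sqrt_le_sqrt
      have : u1 * u2 ≤ Real.sqrt ((1 + p₁ ^ 2 + p₂ ^ 2) ^ 2) := by
        rw [hu1d, hu2d, ← Real.sqrt_mul (by positivity)]
        apply Real.sqrt_le_sqrt; nlinarith
      rw [Real.sqrt_sq (by positivity)] at this
      nlinarith
    have h1 : Real.sqrt (1 + p₁ ^ 2 + p₂ ^ 2 + p₃ ^ 2) ^ S ≤ Real.sqrt (u1 * u2) ^ S :=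
      Real.rpow_le_rpow_of_nonpos (by rw [Real.sqrt_pos]; positivity) hge (by linarith)
    have h2 : Real.sqrt (u1 * u2) ^ S = u1 ^ (S / 2) * u2 ^ (S / 2) := by
      rw [Real.sqrt_eq_rpow, ← Real.rpow_mul (by positivity),
        Real.mul_rpow (by positivity) (by positivity)]
      norm_num [div_eq_inv_mul]
    have h3 : 1 ≤ v ^ (5 + δ) := by
      calc (1:ℝ) = v ^ (0:ℝ) := (Real.rpow_zero v).symm
        _ ≤ v ^ (5 + δ) := Real.rpow_le_rpow_of_exponent_le hv1 (by linarith)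
    have h4 : (0:ℝ) ≤ u1 ^ (S / 2) * u2 ^ (S / 2) := by positivity
    have h5 : R ^ (S - 2 * (S / 2)) = 1 := by
      rw [show S - 2 * (S / 2) = 0 by ring, Real.rpow_zero]
    calc Real.sqrt (1 + p₁ ^ 2 + p₂ ^ 2 + p₃ ^ 2) ^ S ≤ u1 ^ (S / 2) * u2 ^ (S / 2) := by
          rw [← h2]; exact h1
      _ = 1 * 1 * (u1 ^ (S / 2) * u2 ^ (S / 2)) * 1 := by ring
      _ ≤ 1 * R ^ (S - 2 * (S / 2)) * (u1 ^ (S / 2) * u2 ^ (S / 2)) * v ^ (5 + δ) := by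
          rw [h5]
          exact mul_le_mul (le_refl _) h3 (by norm_num) (by positivity)

lemma ballBound (δ C₀ S a κ : ℝ) (hC₀ : 0 < C₀) (ha1 : -1 < a) (ha2 : a ≤ 0) (hκ : 0 < κ)
    (hkey : ∀ R : ℝ, 1 ≤ R → ∀ p₁ p₂ p₃ : ℝ, p₁ ^ 2 + p₂ ^ 2 ≤ R ^ 2 →
      pZero3 (vec3 p₁ p₂ p₃) ^ S ≤
        κ * R ^ (S - 2 * a) *
          (Real.sqrt (1 + p₁ ^ 2) ^ a * Real.sqrt (1 + p₂ ^ 2) ^ a) *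
          Real.sqrt (1 + p₃ ^ 2) ^ (5 + δ))
    (G : EuclideanSpace ℝ (Fin 3) → ℝ) (hGm : Measurable G) (hG0 : ∀ p, 0 ≤ G p)
    (hint : ∀ p₁ p₂ : ℝ,
      (∫⁻ p₃ : ℝ, ENNReal.ofReal (G (vec3 p₁ p₂ p₃) * Real.sqrt (1 + p₃ ^ 2) ^ (5 + δ)))
        ≤ ENNReal.ofReal C₀)
    (R : ℝ) (hR : 1 ≤ R) :
    ∫⁻ p in {p : EuclideanSpace ℝ (Fin 3) | p 0 ^ 2 + p 1 ^ 2 ≤ R ^ 2},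
        ENNReal.ofReal (pZero3 p ^ S * G p)
      ≤ ENNReal.ofReal (κ * C₀ * (2 / (a + 1)) ^ 2 * R ^ (S + 2)) := by
  have hR0 : (0:ℝ) < R := by linarith
  have ha3 : (0:ℝ) < a + 1 := by linarith
  set A : Set (EuclideanSpace ℝ (Fin 3)) := {p | p 0 ^ 2 + p 1 ^ 2 ≤ R ^ 2} with hA
  have hAm : MeasurableSet A :=
    measurableSet_le (((measurable_coord3 0).pow_const 2).add
      ((measurable_coord3 1).pow_const 2)) measurable_const
  set F : EuclideanSpace ℝ (Fin 3) → ℝ≥0∞ :=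
    fun p => ENNReal.ofReal (pZero3 p ^ S * G p) with hF
  have hFm : Measurable F := measurable_FS S G hGm
  set d : ℝ → ℝ≥0∞ := (Set.Icc (-R) R).indicator
      (fun t : ℝ => ENNReal.ofReal (Real.sqrt (1 + t ^ 2) ^ a)) with hd
  have hdm : Measurable d := measurable_dfun a R
  have hdfin : ∀ t, d t ≠ ⊤ := by
    intro t
    rw [hd]
    by_cases h : t ∈ Set.Icc (-R) R
    · rw [Set.indicator_of_mem h]; exact ENNReal.ofReal_ne_top
    · rw [Set.indicator_of_notMem h]; exact ENNReal.zero_ne_top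
  have hJ := Jlem ha1 ha2 hR
  have hJfin : ∫⁻ t, d t ≠ ⊤ := by
    rw [hd, lintegral_indicator measurableSet_Icc]
    exact ne_top_of_le_ne_top ENNReal.ofReal_ne_top hJ
  set c₂ : ℝ≥0∞ := ENNReal.ofReal (κ * R ^ (S - 2 * a) * C₀) with hc₂
  have inner : ∀ p₁ p₂ : ℝ,
      (∫⁻ p₃ : ℝ, (A.indicator F) (vec3 p₁ p₂ p₃)) ≤ c₂ * (d p₁ * d p₂) := by
    intro p₁ p₂
    by_cases hb : p₁ ^ 2 + p₂ ^ 2 ≤ R ^ 2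
    · have hmem : ∀ p₃, vec3 p₁ p₂ p₃ ∈ A := by
        intro p₃
        simp only [hA, Set.mem_setOf_eq, vec3_zero, vec3_one]
        exact hb
      have hp₁ : p₁ ∈ Set.Icc (-R) R := by
        constructor <;> nlinarith [sq_nonneg p₂, sq_nonneg (p₁ - R), sq_nonneg (p₁ + R)]
      have hp₂ : p₂ ∈ Set.Icc (-R) R := by
        constructor <;> nlinarith [sq_nonneg p₁, sq_nonneg (p₂ - R), sq_nonneg (p₂ + R)]
      have hd1 : d p₁ = ENNReal.ofReal (Real.sqrt (1 + p₁ ^ 2) ^ a) := by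
        rw [hd, Set.indicator_of_mem hp₁]
      have hd2 : d p₂ = ENNReal.ofReal (Real.sqrt (1 + p₂ ^ 2) ^ a) := by
        rw [hd, Set.indicator_of_mem hp₂]
      have hcoef : (0:ℝ) ≤ κ * R ^ (S - 2 * a) *
          (Real.sqrt (1 + p₁ ^ 2) ^ a * Real.sqrt (1 + p₂ ^ 2) ^ a) := by positivity
      calc (∫⁻ p₃ : ℝ, (A.indicator F) (vec3 p₁ p₂ p₃))
          = ∫⁻ p₃ : ℝ, F (vec3 p₁ p₂ p₃) := by
            congr 1; funext p₃; rw [Set.indicator_of_mem (hmem p₃)]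
        _ ≤ ∫⁻ p₃ : ℝ, ENNReal.ofReal ((κ * R ^ (S - 2 * a) *
              (Real.sqrt (1 + p₁ ^ 2) ^ a * Real.sqrt (1 + p₂ ^ 2) ^ a)) *
              (G (vec3 p₁ p₂ p₃) * Real.sqrt (1 + p₃ ^ 2) ^ (5 + δ))) := by
            refine lintegral_mono fun p₃ => ENNReal.ofReal_le_ofReal ?_
            have hk := hkey R hR p₁ p₂ p₃ hb
            have h := mul_le_mul_of_nonneg_right hk (hG0 (vec3 p₁ p₂ p₃))
            calc pZero3 (vec3 p₁ p₂ p₃) ^ S * G (vec3 p₁ p₂ p₃)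
                ≤ κ * R ^ (S - 2 * a) *
                    (Real.sqrt (1 + p₁ ^ 2) ^ a * Real.sqrt (1 + p₂ ^ 2) ^ a) *
                    Real.sqrt (1 + p₃ ^ 2) ^ (5 + δ) * G (vec3 p₁ p₂ p₃) := h
              _ = _ := by ring
        _ = ENNReal.ofReal (κ * R ^ (S - 2 * a) *
              (Real.sqrt (1 + p₁ ^ 2) ^ a * Real.sqrt (1 + p₂ ^ 2) ^ a)) *
              ∫⁻ p₃ : ℝ, ENNReal.ofReal
                (G (vec3 p₁ p₂ p₃) * Real.sqrt (1 + p₃ ^ 2) ^ (5 + δ)) := by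
            rw [← lintegral_const_mul' _ _ ENNReal.ofReal_ne_top]
            congr 1; funext p₃
            rw [← ENNReal.ofReal_mul hcoef]
        _ ≤ ENNReal.ofReal (κ * R ^ (S - 2 * a) *
              (Real.sqrt (1 + p₁ ^ 2) ^ a * Real.sqrt (1 + p₂ ^ 2) ^ a)) *
              ENNReal.ofReal C₀ := by
            exact mul_le_mul_right (hint p₁ p₂) _
        _ = c₂ * (d p₁ * d p₂) := by
            rw [hd1, hd2, hc₂, ← ENNReal.ofReal_mul (by positivity),
              ← ENNReal.ofReal_mul (by positivity), ← ENNReal.ofReal_mul (by positivity)]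
            congr 1; ring
    · have hzero : ∀ p₃ : ℝ, (A.indicator F) (vec3 p₁ p₂ p₃) = 0 := by
        intro p₃
        refine Set.indicator_of_notMem ?_ _
        simp only [hA, Set.mem_setOf_eq, vec3_zero, vec3_one]
        exact hb
      simp only [hzero, lintegral_zero]
      exact zero_le
  have hstep : ∫⁻ p in A, F p ≤ c₂ * ((∫⁻ t, d t) * ∫⁻ t, d t) := by
    rw [← lintegral_indicator hAm, lintegral_E3 _ (hFm.indicator hAm)]
    calc (∫⁻ p₁ : ℝ, ∫⁻ p₂ : ℝ, ∫⁻ p₃ : ℝ, (A.indicator F) (vec3 p₁ p₂ p₃))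
        ≤ ∫⁻ p₁ : ℝ, ∫⁻ p₂ : ℝ, c₂ * (d p₁ * d p₂) :=
          lintegral_mono fun p₁ => lintegral_mono fun p₂ => inner p₁ p₂
      _ = ∫⁻ p₁ : ℝ, (c₂ * d p₁) * ∫⁻ t, d t := by
          congr 1; funext p₁
          rw [← lintegral_const_mul' _ _
            (ENNReal.mul_ne_top ENNReal.ofReal_ne_top (hdfin p₁))]
          congr 1; funext p₂; ring
      _ = ∫⁻ p₁ : ℝ, (c₂ * ∫⁻ t, d t) * d p₁ := by
          congr 1; funext p₁; ring
      _ = (c₂ * ∫⁻ t, d t) * ∫⁻ t, d t := by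
          rw [lintegral_const_mul' _ _ (ENNReal.mul_ne_top ENNReal.ofReal_ne_top hJfin)]
      _ = c₂ * ((∫⁻ t, d t) * ∫⁻ t, d t) := by ring
  refine hstep.trans ?_
  have hJd : ∫⁻ t, d t ≤ ENNReal.ofReal (2 / (a + 1) * R ^ (a + 1)) := by
    rw [hd, lintegral_indicator measurableSet_Icc]; exact hJ
  calc c₂ * ((∫⁻ t, d t) * ∫⁻ t, d t)
      ≤ c₂ * (ENNReal.ofReal (2 / (a + 1) * R ^ (a + 1)) *
          ENNReal.ofReal (2 / (a + 1) * R ^ (a + 1))) :=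
        mul_le_mul_right (mul_le_mul' hJd hJd) _
    _ = ENNReal.ofReal (κ * R ^ (S - 2 * a) * C₀ *
          (2 / (a + 1) * R ^ (a + 1) * (2 / (a + 1) * R ^ (a + 1)))) := by
        rw [hc₂, ← ENNReal.ofReal_mul (by positivity), ← ENNReal.ofReal_mul (by positivity)]
    _ = ENNReal.ofReal (κ * C₀ * (2 / (a + 1)) ^ 2 * R ^ (S + 2)) := by
        congr 1
        have hrw : R ^ (S - 2 * a) * (R ^ (a + 1) * R ^ (a + 1)) = R ^ (S + 2) := by
          rw [← Real.rpow_add hR0, ← Real.rpow_add hR0]; ring_nf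
        calc κ * R ^ (S - 2 * a) * C₀ *
              (2 / (a + 1) * R ^ (a + 1) * (2 / (a + 1) * R ^ (a + 1)))
            = κ * C₀ * (2 / (a + 1)) ^ 2 *
                (R ^ (S - 2 * a) * (R ^ (a + 1) * R ^ (a + 1))) := by ring
          _ = _ := by rw [hrw]

end Aux

set_option maxHeartbeats 2000000 in
/-- **Improved interpolation inequality in two-and-one-half dimensions**
(Proposition 7.6).  If `g : ℝ²_x × ℝ³_p → [0,∞)` is measurable with
`sup_{x,p₁,p₂} ∫ g ⟨p₃⟩^{5+δ} dp₃ ≤ C₀`, and `min{M, 5+δ} ≥ S > −2`, then there is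
`C = C(C₀, S, M, δ)` with
`‖p₀^S g‖_{L^{(M+2)/(S+2)}_x L¹_p} ≤ C ‖p₀^M g‖_{L¹_x L¹_p}^{(S+2)/(M+2)}`. -/
theorem improved_interpolation_2_5d (δ C₀ M S : ℝ) (hδ : 0 < δ) (hC₀ : 0 < C₀)
    (hSM : S ≤ M) (hSδ : S ≤ 5 + δ) (hS : -2 < S) :
    ∃ C : ℝ≥0, 0 < C ∧
      ∀ (g : EuclideanSpace ℝ (Fin 2) → EuclideanSpace ℝ (Fin 3) → ℝ),
        Measurable (Function.uncurry g) →
        (∀ x p, 0 ≤ g x p) →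
        (∀ (x : EuclideanSpace ℝ (Fin 2)) (p₁ p₂ : ℝ),
          (∫⁻ p₃ : ℝ, ENNReal.ofReal
              (g x (vec3 p₁ p₂ p₃) * Real.sqrt (1 + p₃ ^ 2) ^ (5 + δ)))
            ≤ ENNReal.ofReal C₀) →
        (∫⁻ x, (∫⁻ p, ENNReal.ofReal (pZero3 p ^ S * g x p)) ^ ((M + 2) / (S + 2)))
              ^ ((S + 2) / (M + 2))
          ≤ C * (∫⁻ x, ∫⁻ p, ENNReal.ofReal (pZero3 p ^ M * g x p))
              ^ ((S + 2) / (M + 2)) := by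
  have hM2 : (0:ℝ) < M + 2 := by linarith
  have hS2 : (0:ℝ) < S + 2 := by linarith
  set θ : ℝ := (S + 2) / (M + 2) with hθ
  set q : ℝ := (M + 2) / (S + 2) with hq
  have hθpos : 0 < θ := by positivity
  have hθle1 : θ ≤ 1 := by rw [hθ, div_le_one hM2]; linarith
  have hqpos : 0 < q := by positivity
  have hθq : θ * q = 1 := by rw [hθ, hq]; field_simp
  have hqθ : q * θ = 1 := by rw [hθ, hq]; field_simp
  obtain ⟨a, ha1, ha2, κ, hκ, hkey⟩ := keyBall S δ hδ hSδ hS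
  have ha3 : (0:ℝ) < a + 1 := by linarith
  set c₁ : ℝ := κ * C₀ * (2 / (a + 1)) ^ 2 with hc₁
  have hc₁pos : 0 < c₁ := by positivity
  set Cr : ℝ := c₁ + 2 with hCr
  have hCr1 : 1 ≤ Cr := by linarith
  have hCrpos : 0 < Cr := by linarith
  refine ⟨Cr.toNNReal, Real.toNNReal_pos.mpr hCrpos, ?_⟩
  intro g hgm hg0 hint
  have hCoe : (Cr.toNNReal : ℝ≥0∞) = ENNReal.ofReal Cr := rfl
  -- the pointwise (in `x`) interpolation estimate
  have main : ∀ x, (∫⁻ p, ENNReal.ofReal (pZero3 p ^ S * g x p))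
      ≤ ENNReal.ofReal Cr * (∫⁻ p, ENNReal.ofReal (pZero3 p ^ M * g x p)) ^ θ := by
    intro x
    have hGm : Measurable (g x) := hgm.of_uncurry_left
    set B := ∫⁻ p, ENNReal.ofReal (pZero3 p ^ M * g x p) with hB
    have hFleB : (∫⁻ p, ENNReal.ofReal (pZero3 p ^ S * g x p)) ≤ B := by
      refine lintegral_mono fun p => ENNReal.ofReal_le_ofReal ?_
      exact mul_le_mul_of_nonneg_right
        (Real.rpow_le_rpow_of_exponent_le (one_le_pZero3 p) hSM) (hg0 x p)
    rcases le_or_gt B 1 with hB1 | hB1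
    · calc (∫⁻ p, ENNReal.ofReal (pZero3 p ^ S * g x p)) ≤ B := hFleB
        _ = B ^ (1:ℝ) := (ENNReal.rpow_one B).symm
        _ ≤ B ^ θ := ENNReal.rpow_le_rpow_of_exponent_ge hB1 hθle1
        _ = 1 * B ^ θ := (one_mul _).symm
        _ ≤ ENNReal.ofReal Cr * B ^ θ := by
            refine mul_le_mul_left ?_ _
            rw [show (1:ℝ≥0∞) = ENNReal.ofReal 1 from (ENNReal.ofReal_one).symm]
            exact ENNReal.ofReal_le_ofReal hCr1
    · rcases eq_or_ne B ⊤ with hBtop | hBtop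
      · rw [hBtop, ENNReal.top_rpow_of_pos hθpos, ENNReal.mul_top
          (by simpa using (ENNReal.ofReal_pos.mpr hCrpos).ne')]
        exact le_top
      · set b := B.toReal with hb
        have hb1 : 1 < b := by
          have := (ENNReal.toReal_lt_toReal (by simp) hBtop).mpr hB1
          simpa using this
        have hb0 : (0:ℝ) < b := by linarith
        have hBb : B = ENNReal.ofReal b := (ENNReal.ofReal_toReal hBtop).symm
        set R := b ^ (1 / (M + 2)) with hR
        have hR1 : 1 < R := by
          rw [hR]
          exact (Real.one_lt_rpow_iff_of_pos hb0).mpr (Or.inl ⟨hb1, by positivity⟩)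
        have hRge : 1 ≤ R := hR1.le
        have hR0 : (0:ℝ) < R := by linarith
        set A : Set (EuclideanSpace ℝ (Fin 3)) :=
          {p | p 0 ^ 2 + p 1 ^ 2 ≤ R ^ 2} with hA
        have hAm : MeasurableSet A :=
          measurableSet_le (((measurable_coord3 0).pow_const 2).add
            ((measurable_coord3 1).pow_const 2)) measurable_const
        have hsplit : (∫⁻ p, ENNReal.ofReal (pZero3 p ^ S * g x p))
            = (∫⁻ p in A, ENNReal.ofReal (pZero3 p ^ S * g x p))
              + ∫⁻ p in Aᶜ, ENNReal.ofReal (pZero3 p ^ S * g x p) :=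
          (lintegral_add_compl _ hAm).symm
        have hball : (∫⁻ p in A, ENNReal.ofReal (pZero3 p ^ S * g x p))
            ≤ ENNReal.ofReal (c₁ * R ^ (S + 2)) := by
          have := ballBound δ C₀ S a κ hC₀ ha1 ha2 hκ hkey (g x) hGm (hg0 x) (hint x) R hRge
          rw [← hc₁] at this
          exact this
        have htail : (∫⁻ p in Aᶜ, ENNReal.ofReal (pZero3 p ^ S * g x p))
            ≤ ENNReal.ofReal (R ^ (S - M)) * B := by
          have hpt : ∀ p ∈ Aᶜ, ENNReal.ofReal (pZero3 p ^ S * g x p)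
              ≤ ENNReal.ofReal (R ^ (S - M)) * ENNReal.ofReal (pZero3 p ^ M * g x p) := by
            intro p hp
            have h1 : R ^ 2 < p 0 ^ 2 + p 1 ^ 2 := by
              have : ¬ (p 0 ^ 2 + p 1 ^ 2 ≤ R ^ 2) := hp
              linarith [not_le.mp this]
            have h2 : p 0 ^ 2 + p 1 ^ 2 ≤ ‖p‖ ^ 2 := by
              rw [norm_sq_E3]; nlinarith [sq_nonneg (p 2)]
            have h3 : R ^ 2 ≤ pZero3 p ^ 2 := by
              rw [pZero3_sq]; nlinarith
            have hRle : R ≤ pZero3 p := by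
              nlinarith [pZero3_pos p]
            rw [← ENNReal.ofReal_mul (Real.rpow_nonneg hR0.le _)]
            refine ENNReal.ofReal_le_ofReal ?_
            calc pZero3 p ^ S * g x p
                ≤ (R ^ (S - M) * pZero3 p ^ M) * g x p :=
                  mul_le_mul_of_nonneg_right (keyTail hSM hR0 p hRle) (hg0 x p)
              _ = R ^ (S - M) * (pZero3 p ^ M * g x p) := by ring
          calc (∫⁻ p in Aᶜ, ENNReal.ofReal (pZero3 p ^ S * g x p))
              ≤ ∫⁻ p in Aᶜ, ENNReal.ofReal (R ^ (S - M))
                  * ENNReal.ofReal (pZero3 p ^ M * g x p) :=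
                setLIntegral_mono ((measurable_FS M (g x) hGm).const_mul _) hpt
            _ = ENNReal.ofReal (R ^ (S - M))
                  * ∫⁻ p in Aᶜ, ENNReal.ofReal (pZero3 p ^ M * g x p) :=
                lintegral_const_mul' _ _ ENNReal.ofReal_ne_top
            _ ≤ ENNReal.ofReal (R ^ (S - M)) * B :=
                mul_le_mul_right (setLIntegral_le_lintegral _ _) _
        have e1 : R ^ (S + 2) = b ^ θ := by
          rw [hR, ← Real.rpow_mul hb0.le]
          congr 1
          rw [hθ]; ring
        have e2 : R ^ (S - M) * b = b ^ θ := by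
          rw [hR, ← Real.rpow_mul hb0.le]
          nth_rewrite 2 [show b = b ^ (1:ℝ) from (Real.rpow_one b).symm]
          rw [← Real.rpow_add hb0]
          congr 1
          rw [hθ]; field_simp; ring
        calc (∫⁻ p, ENNReal.ofReal (pZero3 p ^ S * g x p))
            = (∫⁻ p in A, ENNReal.ofReal (pZero3 p ^ S * g x p))
              + ∫⁻ p in Aᶜ, ENNReal.ofReal (pZero3 p ^ S * g x p) := hsplit
          _ ≤ ENNReal.ofReal (c₁ * R ^ (S + 2)) + ENNReal.ofReal (R ^ (S - M)) * B :=
              add_le_add hball htail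
          _ = ENNReal.ofReal (c₁ * b ^ θ) + ENNReal.ofReal (R ^ (S - M) * b) := by
              rw [e1, hBb, ← ENNReal.ofReal_mul (Real.rpow_nonneg hR0.le _)]
          _ = ENNReal.ofReal (c₁ * b ^ θ + b ^ θ) := by
              rw [e2, ← ENNReal.ofReal_add (by positivity) (by positivity)]
          _ ≤ ENNReal.ofReal (Cr * b ^ θ) := by
              refine ENNReal.ofReal_le_ofReal ?_
              have hbθ : (0:ℝ) ≤ b ^ θ := Real.rpow_nonneg hb0.le θ
              rw [hCr]; nlinarith
          _ = ENNReal.ofReal Cr * ENNReal.ofReal (b ^ θ) :=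
              ENNReal.ofReal_mul hCrpos.le
          _ = ENNReal.ofReal Cr * B ^ θ := by
              rw [hBb, ENNReal.ofReal_rpow_of_pos hb0]
  -- assembly
  rw [hCoe]
  have hCrne : (ENNReal.ofReal Cr) ^ q ≠ ⊤ :=
    ENNReal.rpow_ne_top_of_nonneg hqpos.le ENNReal.ofReal_ne_top
  calc (∫⁻ x, (∫⁻ p, ENNReal.ofReal (pZero3 p ^ S * g x p)) ^ q) ^ θ
      ≤ (∫⁻ x, (ENNReal.ofReal Cr
          * (∫⁻ p, ENNReal.ofReal (pZero3 p ^ M * g x p)) ^ θ) ^ q) ^ θ :=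
        ENNReal.rpow_le_rpow (lintegral_mono fun x =>
          ENNReal.rpow_le_rpow (main x) hqpos.le) hθpos.le
    _ = (∫⁻ x, (ENNReal.ofReal Cr) ^ q
          * (∫⁻ p, ENNReal.ofReal (pZero3 p ^ M * g x p))) ^ θ := by
        congr 1
        refine lintegral_congr fun x => ?_
        rw [ENNReal.mul_rpow_of_nonneg _ _ hqpos.le, ← ENNReal.rpow_mul, hθq,
          ENNReal.rpow_one]
    _ = ((ENNReal.ofReal Cr) ^ q
          * ∫⁻ x, ∫⁻ p, ENNReal.ofReal (pZero3 p ^ M * g x p)) ^ θ := by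
        rw [lintegral_const_mul' _ _ hCrne]
    _ = (ENNReal.ofReal Cr) ^ (q * θ)
          * (∫⁻ x, ∫⁻ p, ENNReal.ofReal (pZero3 p ^ M * g x p)) ^ θ := by
        rw [ENNReal.mul_rpow_of_nonneg _ _ hθpos.le, ENNReal.rpow_mul]
    _ = ENNReal.ofReal Cr
          * (∫⁻ x, ∫⁻ p, ENNReal.ofReal (pZero3 p ^ M * g x p)) ^ θ := by
        rw [hqθ, ENNReal.rpow_one]
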